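/- For all propositional formulas φ, ψ in the language with ∧, ∨, ¬, the following are equivalent: (1) φ ⊢_C ψ (ψ is a classical consequence of φ, i.e., every Boolean valuation making φ true makes ψ true); (2) ⋁_{δ ∈ sd(P)} (δ ∧ φ) ⊢_F ψ, where P = Prop(φ) ∪ Prop(ψ) is the set of propositional variables occurring in φ or ψ, sd(P) is the set of state descriptions over P, and the disjunction is taken over all δ ∈ sd(P) (associated in some fixed way). -/
import Mathlib


/-- Propositional formulas in `∧`, `∨`, `¬` over countably many variables. -/
inductive Fml : Type
  | var : ℕ → Fml
  | and : Fml → Fml → Fml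
  | or : Fml → Fml → Fml
  | neg : Fml → Fml
deriving DecidableEq

/-- Fundamental logic: the smallest intro-elim logic. -/
inductive FDer : Fml → Fml → Prop
  | refl (φ : Fml) : FDer φ φ
  | andE1 (φ ψ : Fml) : FDer (.and φ ψ) φ
  | andE2 (φ ψ : Fml) : FDer (.and φ ψ) ψ
  | orI1 (φ ψ : Fml) : FDer φ (.or φ ψ)
  | orI2 (φ ψ : Fml) : FDer φ (.or ψ φ)
  | dni (φ : Fml) : FDer φ (.neg (.neg φ))
  | exf (φ ψ : Fml) : FDer (.and φ (.neg φ)) ψ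
  | trans {φ ψ χ : Fml} : FDer φ ψ → FDer ψ χ → FDer φ χ
  | andI {φ ψ χ : Fml} : FDer φ ψ → FDer φ χ → FDer φ (.and ψ χ)
  | orE {φ ψ χ : Fml} : FDer φ χ → FDer ψ χ → FDer (.or φ ψ) χ
  | contra {φ ψ : Fml} : FDer φ ψ → FDer (.neg ψ) (.neg φ)

/-- Classical Boolean evaluation of a formula under a valuation. -/
def evalF (π : ℕ → Bool) : Fml → Bool
  | .var p => π p
  | .and φ ψ => evalF π φ && evalF π ψ
  | .or φ ψ => evalF π φ || evalF π ψ
  | .neg φ => ! evalF π φ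

/-- The set of propositional variables occurring in a formula. -/
def varsF : Fml → Finset ℕ
  | .var p => {p}
  | .and φ ψ => varsF φ ∪ varsF ψ
  | .or φ ψ => varsF φ ∪ varsF ψ
  | .neg φ => varsF φ

/-- The literal `p` or `¬p`, according to the sign `s p`. -/
def lit (s : ℕ → Bool) (p : ℕ) : Fml :=
  if s p then .var p else .neg (.var p)

/-- The state description `±p₁ ∧ ⋯ ∧ ±pₙ` over a list of variables, with signs
given by `s` (left associated; junk value for the empty list, which is not used). -/
def sdFml (s : ℕ → Bool) : List ℕ → Fml
  | [] => .var 0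
  | p :: rest => rest.foldl (fun acc q => .and acc (lit s q)) (lit s p)

/-- All sign assignments on a given list of variables. -/
def allSigns : List ℕ → List (ℕ → Bool)
  | [] => [fun _ => false]
  | p :: rest =>
      (allSigns rest).flatMap fun s => [Function.update s p false, Function.update s p true]

/-- Left-associated disjunction of a list of formulas (junk value for the empty list,
which is not used). -/
def disjFml : List Fml → Fml
  | [] => .var 0
  | f :: rest => rest.foldl .or f

/-- The disjunction `⋁_{δ ∈ sd(P)} (δ ∧ φ)` where `P = Prop(φ) ∪ Prop(ψ)`. -/
def sdDisj (φ ψ : Fml) : Fml :=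
  disjFml
    (((allSigns ((varsF φ ∪ varsF ψ).sort (· ≤ ·))).map
      fun s => Fml.and (sdFml s ((varsF φ ∪ varsF ψ).sort (· ≤ ·))) φ))

/-! ### Auxiliary lemmas -/

lemma evalF_sound {α β : Fml} (h : FDer α β) (π : ℕ → Bool) :
    evalF π α = true → evalF π β = true := by
  induction h with
  | refl φ => exact id
  | andE1 φ ψ => intro h; simp [evalF] at h; exact h.1
  | andE2 φ ψ => intro h; simp [evalF] at h; exact h.2
  | orI1 φ ψ => intro h; simp [evalF, h]
  | orI2 φ ψ => intro h; simp [evalF, h]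
  | dni φ => intro h; simp [evalF, h]
  | exf φ ψ => intro h; simp [evalF] at h
  | trans h1 h2 ih1 ih2 => intro h; exact ih2 (ih1 h)
  | andI h1 h2 ih1 ih2 => intro h; simp [evalF, ih1 h, ih2 h]
  | orE h1 h2 ih1 ih2 =>
      intro h; simp [evalF] at h; rcases h with h | h
      · exact ih1 h
      · exact ih2 h
  | contra h ih =>
      intro hn; simp only [evalF, Bool.not_eq_true'] at hn ⊢
      by_contra hc
      rw [Bool.not_eq_false] at hc
      simp [ih hc] at hn

lemma evalF_lit (π s : ℕ → Bool) (p : ℕ) : evalF π (lit s p) = (s p == π p) := by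
  unfold lit
  cases h : s p <;> cases h2 : π p <;> simp [evalF, h2]

lemma evalF_foldl_and (π s : ℕ → Bool) (L : List ℕ) (a : Fml) :
    evalF π (L.foldl (fun acc q => .and acc (lit s q)) a)
      = (evalF π a && L.all fun q => evalF π (lit s q)) := by
  induction L generalizing a with
  | nil => simp
  | cons p rest ih => simp [List.foldl, ih, evalF, Bool.and_assoc]

lemma evalF_foldl_or (π : ℕ → Bool) (L : List Fml) (a : Fml) :
    evalF π (L.foldl .or a) = (evalF π a || L.any fun f => evalF π f) := by
  induction L generalizing a with
  | nil => simp
  | cons f rest ih => simp [List.foldl, ih, evalF, Bool.or_assoc]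

lemma FDer_foldl_or {χ : Fml} (L : List Fml) (a : Fml) (ha : FDer a χ)
    (hL : ∀ f ∈ L, FDer f χ) : FDer (L.foldl .or a) χ := by
  induction L generalizing a with
  | nil => exact ha
  | cons f rest ih =>
      exact ih _ (FDer.orE ha (hL f (by simp))) (fun g hg => hL g (by simp [hg]))

lemma FDer_disjFml {χ : Fml} (L : List Fml) (hne : L ≠ [])
    (hL : ∀ f ∈ L, FDer f χ) : FDer (disjFml L) χ := by
  match L with
  | [] => exact absurd rfl hne
  | f :: rest =>
      exact FDer_foldl_or rest f (hL f (by simp)) (fun g hg => hL g (by simp [hg]))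

lemma FDer_foldl_and (s : ℕ → Bool) (L : List ℕ) (a : Fml) :
    FDer (L.foldl (fun acc q => .and acc (lit s q)) a) a ∧
    ∀ p ∈ L, FDer (L.foldl (fun acc q => .and acc (lit s q)) a) (lit s p) := by
  induction L generalizing a with
  | nil => exact ⟨FDer.refl a, by simp⟩
  | cons q rest ih =>
      obtain ⟨h1, h2⟩ := ih (.and a (lit s q))
      refine ⟨h1.trans (FDer.andE1 _ _), ?_⟩
      intro p hp
      rcases List.mem_cons.mp hp with h | h
      · subst h; exact h1.trans (FDer.andE2 _ _)
      · exact h2 p h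

lemma FDer_sdFml_lit (s : ℕ → Bool) {p : ℕ} {L : List ℕ} (hp : p ∈ L) :
    FDer (sdFml s L) (lit s p) := by
  match L with
  | [] => simp at hp
  | q :: rest =>
      rcases List.mem_cons.mp hp with h | h
      · subst h; exact (FDer_foldl_and s rest (lit s p)).1
      · exact (FDer_foldl_and s rest (lit s q)).2 p h

lemma FDer_neg_or (a b : Fml) :
    FDer (.and (.neg a) (.neg b)) (.neg (.or a b)) := by
  have h1 : FDer a (.neg (.and (.neg a) (.neg b))) :=
    (FDer.dni a).trans (FDer.contra (FDer.andE1 _ _))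
  have h2 : FDer b (.neg (.and (.neg a) (.neg b))) :=
    (FDer.dni b).trans (FDer.contra (FDer.andE2 _ _))
  exact (FDer.dni _).trans (FDer.contra (FDer.orE h1 h2))

lemma truth (s : ℕ → Bool) (L : List ℕ) (χ : Fml) (hv : ∀ p ∈ varsF χ, p ∈ L) :
    (evalF s χ = true → FDer (sdFml s L) χ) ∧
    (evalF s χ = false → FDer (sdFml s L) (.neg χ)) := by
  induction χ with
  | var p =>
      have hp : p ∈ L := hv p (by simp [varsF])
      have h := FDer_sdFml_lit s hp
      constructor
      · intro he; simp [evalF] at he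
        simpa [lit, he] using h
      · intro he; simp [evalF] at he
        simpa [lit, he] using h
  | and χ1 χ2 ih1 ih2 =>
      have hv1 : ∀ p ∈ varsF χ1, p ∈ L := fun p hp => hv p (by simp [varsF, hp])
      have hv2 : ∀ p ∈ varsF χ2, p ∈ L := fun p hp => hv p (by simp [varsF, hp])
      obtain ⟨t1, f1⟩ := ih1 hv1
      obtain ⟨t2, f2⟩ := ih2 hv2
      constructor
      · intro he; simp [evalF] at he
        exact FDer.andI (t1 he.1) (t2 he.2)
      · intro he
        by_cases h1 : evalF s χ1 = true
        · have h2 : evalF s χ2 = false := by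
            simp [evalF, h1] at he; exact he
          exact (f2 h2).trans (FDer.contra (FDer.andE2 _ _))
        · exact (f1 (by simpa using h1)).trans (FDer.contra (FDer.andE1 _ _))
  | or χ1 χ2 ih1 ih2 =>
      have hv1 : ∀ p ∈ varsF χ1, p ∈ L := fun p hp => hv p (by simp [varsF, hp])
      have hv2 : ∀ p ∈ varsF χ2, p ∈ L := fun p hp => hv p (by simp [varsF, hp])
      obtain ⟨t1, f1⟩ := ih1 hv1
      obtain ⟨t2, f2⟩ := ih2 hv2
      constructor
      · intro he; simp [evalF] at he
        rcases he with he | he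
        · exact (t1 he).trans (FDer.orI1 _ _)
        · exact (t2 he).trans (FDer.orI2 _ _)
      · intro he; simp [evalF] at he
        exact (FDer.andI (f1 he.1) (f2 he.2)).trans (FDer_neg_or _ _)
  | neg χ0 ih =>
      obtain ⟨t0, f0⟩ := ih (fun p hp => hv p (by simpa [varsF] using hp))
      constructor
      · intro he; simp [evalF] at he
        exact f0 he
      · intro he; simp [evalF] at he
        exact (t0 he).trans (FDer.dni _)

lemma allSigns_covers (π : ℕ → Bool) (L : List ℕ) :
    ∃ s ∈ allSigns L, ∀ p ∈ L, s p = π p := by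
  induction L with
  | nil => exact ⟨fun _ => false, by simp [allSigns], by simp⟩
  | cons p rest ih =>
      obtain ⟨s, hs, hag⟩ := ih
      refine ⟨Function.update s p (π p), ?_, ?_⟩
      · simp only [allSigns, List.mem_flatMap]
        exact ⟨s, hs, by cases π p <;> simp⟩
      · intro q hq
        rcases List.mem_cons.mp hq with h | h
        · subst h; simp
        · by_cases hqp : q = p
          · subst hqp; simp
          · rw [Function.update_of_ne hqp]; exact hag q h

lemma allSigns_ne_nil (L : List ℕ) : allSigns L ≠ [] := by
  obtain ⟨s, hs, -⟩ := allSigns_covers (fun _ => false) L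
  exact List.ne_nil_of_mem hs

lemma varsF_nonempty (χ : Fml) : (varsF χ).Nonempty := by
  induction χ with
  | var p => exact ⟨p, by simp [varsF]⟩
  | and χ1 χ2 ih1 ih2 => exact ih1.mono (by simp [varsF, Finset.subset_union_left])
  | or χ1 χ2 ih1 ih2 => exact ih1.mono (by simp [varsF, Finset.subset_union_left])
  | neg χ0 ih => exact ih

theorem stmt_19 (φ ψ : Fml) :
    (∀ π : ℕ → Bool, evalF π φ = true → evalF π ψ = true) ↔ FDer (sdDisj φ ψ) ψ := by
  set L : List ℕ := (varsF φ ∪ varsF ψ).sort (· ≤ ·) with hLdef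
  have hmemL : ∀ p, p ∈ L ↔ p ∈ varsF φ ∪ varsF ψ := by
    intro p; rw [hLdef]; exact Finset.mem_sort _
  have hvφ : ∀ p ∈ varsF φ, p ∈ L := by
    intro p hp; rw [hmemL]; exact Finset.mem_union_left _ hp
  have hvψ : ∀ p ∈ varsF ψ, p ∈ L := by
    intro p hp; rw [hmemL]; exact Finset.mem_union_right _ hp
  have hLne : L ≠ [] := by
    intro h
    obtain ⟨p, hp⟩ := varsF_nonempty φ
    have := hvφ p hp
    rw [h] at this; simp at this
  constructor
  · -- classical consequence → derivation
    intro h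
    unfold sdDisj
    rw [← hLdef]
    apply FDer_disjFml
    · simp [allSigns_ne_nil L]
    · intro f hf
      simp only [List.mem_map] at hf
      obtain ⟨s, hs, rfl⟩ := hf
      obtain ⟨tφ, fφ⟩ := truth s L φ hvφ
      obtain ⟨tψ, -⟩ := truth s L ψ hvψ
      cases hev : evalF s φ with
      | true =>
          exact (FDer.andE1 _ _).trans (tψ (h s hev))
      | false =>
          have hd : FDer (.and (sdFml s L) φ) (.and φ (.neg φ)) :=
            FDer.andI (FDer.andE2 _ _) ((FDer.andE1 _ _).trans (fφ hev))
          exact hd.trans (FDer.exf _ _)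
  · -- derivation → classical consequence
    intro h π hπ
    apply evalF_sound h π
    obtain ⟨s, hs, hag⟩ := allSigns_covers π L
    have hsd : evalF π (sdFml s L) = true := by
      match L, hLne with
      | p :: rest, _ =>
          have hlit : ∀ q ∈ (p :: rest), evalF π (lit s q) = true := by
            intro q hq
            rw [evalF_lit]
            simp [hag q hq]
          show evalF π (rest.foldl (fun acc q => .and acc (lit s q)) (lit s p)) = true
          rw [evalF_foldl_and]
          simp only [Bool.and_eq_true, List.all_eq_true]
          exact ⟨hlit p (by simp), fun q hq => hlit q (by simp [hq])⟩
    unfold sdDisj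
    rw [← hLdef]
    have hmem : Fml.and (sdFml s L) φ ∈
        (allSigns L).map (fun s => Fml.and (sdFml s L) φ) :=
      List.mem_map.mpr ⟨s, hs, rfl⟩
    match hE : (allSigns L).map (fun s => Fml.and (sdFml s L) φ), hmem with
    | f :: rest, hmem =>
        show evalF π (rest.foldl .or f) = true
        rw [evalF_foldl_or]
        simp only [Bool.or_eq_true, List.any_eq_true]
        rcases List.mem_cons.mp hmem with hh | hh
        · left; rw [← hh]; simp [evalF, hsd, hπ]
        · right; exact ⟨_, hh, by simp [evalF, hsd, hπ]⟩
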